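/- Let K be a field, n ≥ 5, and N_1, N_2 the anti-isomorphic nilpotent semigroups N_1 = ⟨u,v | u^{n-1}=u^n, uv=u^{n-1}, vu=u^{n-2}, v^2=u^{n-2}⟩ and N_2 = ⟨u,v | u^{n-1}=u^n, uv=u^{n-2}, vu=u^{n-1}, v^2=u^{n-2}⟩. Then the contracted semigroup algebras K N_1 and K N_2 are isomorphic. -/

import Mathlib

/-- `sgPow S i` is the set `Sⁱ` of all products of `i` elements of `S`
(with the convention `S⁰ = S¹ = S`). -/
def sgPow (S : Type*) [Mul S] : ℕ → Set S
  | 0 => Set.univ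
  | 1 => Set.univ
  | n + 2 => Set.image2 (· * ·) (sgPow S (n + 1)) Set.univ

/-- A semigroup with zero is nilpotent of class `c` if `S^(c+1) = {0}` and `S^c ≠ {0}`. -/
def IsNilpotentOfClass (S : Type*) [SemigroupWithZero S] (c : ℕ) : Prop :=
  sgPow S (c + 1) = {0} ∧ sgPow S c ≠ {0}

/-- `mpow x i` is the power `xⁱ` in a magma, for `i ≥ 1` (with `mpow x 0 = x` by convention). -/
def mpow {S : Type*} [Mul S] (x : S) : ℕ → S
  | 0 => x
  | 1 => x
  | n + 2 => mpow x (n + 1) * x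
section AlgebraDefs

variable (K : Type*) [Field K] (A : Type*) [NonUnitalRing A] [Module K A]
  [SMulCommClass K A A] [IsScalarTower K A A]

/-- `algPow K A i` is the submodule `Aⁱ` spanned by all products of `i` elements
(with `A⁰ = A¹ = A`). -/
def algPow : ℕ → Submodule K A
  | 0 => ⊤
  | 1 => ⊤
  | n + 2 => Submodule.span K (Set.image2 (· * ·) ((algPow (n + 1) : Submodule K A) : Set A) Set.univ)

/-- The dimension of the layer `Aⁱ/Aⁱ⁺¹`. -/
noncomputable def algLayerDim (i : ℕ) : ℕ :=
  Module.finrank K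
    (↥(algPow K A i) ⧸ (algPow K A (i + 1)).comap (algPow K A i).subtype)

/-- The coclass of the nilpotent quotient `A/Aⁱ`, namely `dim (A/Aⁱ) - (i - 1)`. -/
noncomputable def algCcQuot (i : ℕ) : ℕ :=
  Module.finrank K (A ⧸ algPow K A i) - (i - 1)

/-- A finitely generated residually nilpotent algebra has coclass `r` if the coclasses
of its nilpotent quotients `A/Aⁱ` converge to `r`. -/
def HasCoclassAlg (r : ℕ) : Prop :=
  ∀ᶠ i in Filter.atTop, algCcQuot K A i = r

/-- The two-sided annihilator of an algebra, as a submodule. -/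
def twoSidedAnn : Submodule K A where
  carrier := {a | (∀ b, a * b = 0) ∧ ∀ b, b * a = 0}
  add_mem' := by
    intro a b ha hb
    exact ⟨fun c => by rw [add_mul, ha.1 c, hb.1 c, add_zero],
           fun c => by rw [mul_add, ha.2 c, hb.2 c, add_zero]⟩
  zero_mem' := ⟨fun b => zero_mul b, fun b => mul_zero b⟩
  smul_mem' := by
    intro k a ha
    exact ⟨fun b => by rw [smul_mul_assoc, ha.1 b, smul_zero],
           fun b => by rw [mul_smul_comm, ha.2 b, smul_zero]⟩

/-- The right annihilator of an algebra, as a submodule. -/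
def rightAnn : Submodule K A where
  carrier := {a | ∀ b, b * a = 0}
  add_mem' := by
    intro a b ha hb c
    rw [mul_add, ha c, hb c, add_zero]
  zero_mem' := fun b => mul_zero b
  smul_mem' := by
    intro k a ha b
    rw [mul_smul_comm, ha b, smul_zero]

end AlgebraDefs

/-- `IsContractedAlgebra K f` asserts that `f : S → A` exhibits the algebra `A` as the
contracted semigroup algebra of the semigroup-with-zero `S` over the field `K`:
`f` is multiplicative, sends zero to zero, and the images of the non-zero elements
of `S` form a `K`-basis of `A`. -/
def IsContractedAlgebra (K : Type*) [Field K] {S A : Type*} [SemigroupWithZero S]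
    [NonUnitalRing A] [Module K A] (f : S → A) : Prop :=
  f 0 = 0 ∧ (∀ s t : S, f (s * t) = f s * f t) ∧
  LinearIndependent K (fun s : {s : S // s ≠ 0} => f s.1) ∧
  Submodule.span K (Set.range fun s : {s : S // s ≠ 0} => f s.1) = ⊤
/-- `IsCC1Sg n a b c S u v` asserts that `S` is the nilpotent semigroup of order `n`
with zero given by the presentation
`⟨u, v ∣ u^(n-1) = u^n, u*v = u^a, v*u = u^b, v*v = u^c⟩`:
its distinct elements are `u, u², …, u^(n-2), v` and the zero `u^(n-1)`. -/
def IsCC1Sg (n a b c : ℕ) (S : Type*) [SemigroupWithZero S] (u v : S) : Prop :=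
  mpow u (n - 1) = 0 ∧ u * v = mpow u a ∧ v * u = mpow u b ∧ v * v = mpow u c ∧
  v ≠ 0 ∧ (∀ i, 1 ≤ i → i ≤ n - 2 → mpow u i ≠ 0) ∧
  (∀ i j, 1 ≤ i → i ≤ n - 2 → 1 ≤ j → j ≤ n - 2 → mpow u i = mpow u j → i = j) ∧
  (∀ i, 1 ≤ i → i ≤ n - 2 → v ≠ mpow u i) ∧
  (∀ s : S, s = 0 ∨ s = v ∨ ∃ i, 1 ≤ i ∧ i ≤ n - 2 ∧ s = mpow u i)
lemma mpow_succ' {S : Type*} [Mul S] (u : S) {i : ℕ} (hi : 1 ≤ i) :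
    mpow u (i + 1) = mpow u i * u := by
  obtain ⟨k, rfl⟩ : ∃ k, i = k + 1 := ⟨i - 1, by omega⟩
  rfl

lemma mpow_add' {S : Type*} [Semigroup S] (u : S) {i j : ℕ} (hi : 1 ≤ i) (hj : 1 ≤ j) :
    mpow u i * mpow u j = mpow u (i + j) := by
  induction j with
  | zero => omega
  | succ m ih =>
    rcases Nat.lt_or_ge m 1 with h1 | h1
    · obtain rfl : m = 0 := by omega
      rw [mpow_succ' u hi]; rfl
    · rw [mpow_succ' u h1, ← mul_assoc, ih h1, ← mpow_succ' u (by omega), ← Nat.add_assoc]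

lemma mpow_eq_zero' {S : Type*} [SemigroupWithZero S] (u : S) {m : ℕ} (hm : 1 ≤ m)
    (h : mpow u m = 0) : ∀ i, m ≤ i → mpow u i = 0 := by
  have key : ∀ k, mpow u (m + k) = 0 := by
    intro k
    induction k with
    | zero => simpa using h
    | succ p ih => rw [← Nat.add_assoc, mpow_succ' u (by omega), ih, zero_mul]
  intro i hi
  obtain ⟨k, rfl⟩ := Nat.exists_eq_add_of_le hi
  exact key k

/-- For a field `K` and `n ≥ 5`, the contracted semigroup algebras `K N₁` and `K N₂` of
the anti-isomorphic semigroups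
`N₁ = ⟨u,v ∣ u^(n-1) = uⁿ, u*v = u^(n-1), v*u = u^(n-2), v² = u^(n-2)⟩` and
`N₂ = ⟨u,v ∣ u^(n-1) = uⁿ, u*v = u^(n-2), v*u = u^(n-1), v² = u^(n-2)⟩`
are isomorphic. -/
theorem statement14 {K : Type*} [Field K] (n : ℕ) (hn : 5 ≤ n)
    {S₁ : Type*} [SemigroupWithZero S₁] (u₁ v₁ : S₁)
    (h₁ : IsCC1Sg n (n - 1) (n - 2) (n - 2) S₁ u₁ v₁)
    {S₂ : Type*} [SemigroupWithZero S₂] (u₂ v₂ : S₂)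
    (h₂ : IsCC1Sg n (n - 2) (n - 1) (n - 2) S₂ u₂ v₂)
    {A : Type*} [NonUnitalRing A] [Module K A] [SMulCommClass K A A] [IsScalarTower K A A]
    {B : Type*} [NonUnitalRing B] [Module K B] [SMulCommClass K B B] [IsScalarTower K B B]
    (f : S₁ → A) (hf : IsContractedAlgebra K f)
    (g : S₂ → B) (hg : IsContractedAlgebra K g) :
    ∃ e : A →ₙₐ[K] B, Function.Bijective e := by
  classical
  obtain ⟨hf0, hfm, hfli, hfsp⟩ := hf
  obtain ⟨hg0, hgm, hgli, hgsp⟩ := hg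
  obtain ⟨e1z, e1uv, e1vu, e1vv, e1v0, e1p0, e1inj, e1vp, e1cls⟩ := h₁
  obtain ⟨e2z, e2uv, e2vu, e2vv, e2v0, e2p0, e2inj, e2vp, e2cls⟩ := h₂
  -- powers vanish from n-1 on
  have hu1 : ∀ i, n - 1 ≤ i → mpow u₁ i = 0 := mpow_eq_zero' u₁ (by omega) e1z
  have hu2 : ∀ i, n - 1 ≤ i → mpow u₂ i = 0 := mpow_eq_zero' u₂ (by omega) e2z
  -- semigroup product rules
  have s1_uv : ∀ i, 1 ≤ i → mpow u₁ i * v₁ = 0 := by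
    intro i hi
    rcases Nat.lt_or_ge i 2 with h | h
    · obtain rfl : i = 1 := by omega
      show u₁ * v₁ = 0
      rw [e1uv, hu1 (n - 1) le_rfl]
    · have hdec : mpow u₁ i = mpow u₁ (i - 1) * u₁ := by
        rw [← mpow_succ' u₁ (show 1 ≤ i - 1 by omega)]
        congr 1; omega
      rw [hdec, mul_assoc, e1uv, mpow_add' u₁ (by omega) (by omega), hu1 _ (by omega)]
  have s1_vu : ∀ i, 1 ≤ i → v₁ * mpow u₁ i = mpow u₁ (n - 3 + i) := by
    intro i hi
    rcases Nat.lt_or_ge i 2 with h | h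
    · obtain rfl : i = 1 := by omega
      show v₁ * u₁ = mpow u₁ (n - 3 + 1)
      rw [e1vu]; congr 1; omega
    · have hdec : mpow u₁ i = u₁ * mpow u₁ (i - 1) := by
        have := mpow_add' u₁ (show 1 ≤ 1 by omega) (show 1 ≤ i - 1 by omega)
        rw [show (1 : ℕ) + (i - 1) = i by omega] at this
        exact this.symm
      rw [hdec, ← mul_assoc, e1vu, mpow_add' u₁ (by omega) (by omega)]
      congr 1; omega
  have s2_uv : ∀ i, 1 ≤ i → mpow u₂ i * v₂ = mpow u₂ (n - 3 + i) := by
    intro i hi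
    rcases Nat.lt_or_ge i 2 with h | h
    · obtain rfl : i = 1 := by omega
      show u₂ * v₂ = mpow u₂ (n - 3 + 1)
      rw [e2uv]; congr 1; omega
    · have hdec : mpow u₂ i = mpow u₂ (i - 1) * u₂ := by
        rw [← mpow_succ' u₂ (show 1 ≤ i - 1 by omega)]
        congr 1; omega
      rw [hdec, mul_assoc, e2uv, mpow_add' u₂ (by omega) (by omega)]
      congr 1; omega
  have s2_vu : ∀ i, 1 ≤ i → v₂ * mpow u₂ i = 0 := by
    intro i hi
    rcases Nat.lt_or_ge i 2 with h | h
    · obtain rfl : i = 1 := by omega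
      show v₂ * u₂ = 0
      rw [e2vu, hu2 (n - 1) le_rfl]
    · have hdec : mpow u₂ i = u₂ * mpow u₂ (i - 1) := by
        have := mpow_add' u₂ (show 1 ≤ 1 by omega) (show 1 ≤ i - 1 by omega)
        rw [show (1 : ℕ) + (i - 1) = i by omega] at this
        exact this.symm
      rw [hdec, ← mul_assoc, e2vu, mpow_add' u₂ (by omega) (by omega), hu2 _ (by omega)]
  -- index functions
  have exidx1 : ∀ s : S₁, ∃ i : ℕ, s ≠ 0 → s ≠ v₁ → 1 ≤ i ∧ i ≤ n - 2 ∧ s = mpow u₁ i := by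
    intro s
    rcases e1cls s with h | h | ⟨i, h1, h2, h3⟩
    · exact ⟨1, fun h0 _ => absurd h h0⟩
    · exact ⟨1, fun _ hv => absurd h hv⟩
    · exact ⟨i, fun _ _ => ⟨h1, h2, h3⟩⟩
  choose idx1 hidx1 using exidx1
  have exidx2 : ∀ s : S₂, ∃ i : ℕ, s ≠ 0 → s ≠ v₂ → 1 ≤ i ∧ i ≤ n - 2 ∧ s = mpow u₂ i := by
    intro s
    rcases e2cls s with h | h | ⟨i, h1, h2, h3⟩
    · exact ⟨1, fun h0 _ => absurd h h0⟩
    · exact ⟨1, fun _ hv => absurd h hv⟩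
    · exact ⟨i, fun _ _ => ⟨h1, h2, h3⟩⟩
  choose idx2 hidx2 using exidx2
  -- the linear maps
  obtain ⟨L, hLdef⟩ : ∃ L : A →ₗ[K] B, ∀ s : {s : S₁ // s ≠ 0},
      L (f s.1) = if s.1 = v₁ then g (mpow u₂ (n - 3)) - g v₂ else g (mpow u₂ (idx1 s.1)) :=
    ⟨(Module.Basis.mk hfli hfsp.ge).constr K
        (fun s => if s.1 = v₁ then g (mpow u₂ (n - 3)) - g v₂ else g (mpow u₂ (idx1 s.1))),
     fun s => by
       conv_lhs => rw [show f s.1 = Module.Basis.mk hfli hfsp.ge s from (Module.Basis.mk_apply hfli hfsp.ge s).symm]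
       rw [Module.Basis.constr_basis]⟩
  obtain ⟨L', hL'def⟩ : ∃ L' : B →ₗ[K] A, ∀ s : {s : S₂ // s ≠ 0},
      L' (g s.1) = if s.1 = v₂ then f (mpow u₁ (n - 3)) - f v₁ else f (mpow u₁ (idx2 s.1)) :=
    ⟨(Module.Basis.mk hgli hgsp.ge).constr K
        (fun s => if s.1 = v₂ then f (mpow u₁ (n - 3)) - f v₁ else f (mpow u₁ (idx2 s.1))),
     fun s => by
       conv_lhs => rw [show g s.1 = Module.Basis.mk hgli hgsp.ge s from (Module.Basis.mk_apply hgli hgsp.ge s).symm]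
       rw [Module.Basis.constr_basis]⟩
  -- evaluation lemmas
  have Lv : L (f v₁) = g (mpow u₂ (n - 3)) - g v₂ := by
    rw [hLdef ⟨v₁, e1v0⟩, if_pos rfl]
  have L'v : L' (g v₂) = f (mpow u₁ (n - 3)) - f v₁ := by
    rw [hL'def ⟨v₂, e2v0⟩, if_pos rfl]
  have Lpow : ∀ i, 1 ≤ i → L (f (mpow u₁ i)) = g (mpow u₂ i) := by
    intro i hi
    rcases le_or_gt i (n - 2) with h | h
    · have h0 := e1p0 i hi h
      have hv : mpow u₁ i ≠ v₁ := fun hh => e1vp i hi h hh.symm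
      rw [hLdef ⟨mpow u₁ i, h0⟩, if_neg hv]
      obtain ⟨hb1, hb2, hb3⟩ := hidx1 (mpow u₁ i) h0 hv
      rw [e1inj (idx1 (mpow u₁ i)) i hb1 hb2 hi h hb3.symm]
    · rw [hu1 i (by omega), hu2 i (by omega), hf0, hg0, map_zero]
  have L'pow : ∀ i, 1 ≤ i → L' (g (mpow u₂ i)) = f (mpow u₁ i) := by
    intro i hi
    rcases le_or_gt i (n - 2) with h | h
    · have h0 := e2p0 i hi h
      have hv : mpow u₂ i ≠ v₂ := fun hh => e2vp i hi h hh.symm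
      rw [hL'def ⟨mpow u₂ i, h0⟩, if_neg hv]
      obtain ⟨hb1, hb2, hb3⟩ := hidx2 (mpow u₂ i) h0 hv
      rw [e2inj (idx2 (mpow u₂ i)) i hb1 hb2 hi h hb3.symm]
    · rw [hu1 i (by omega), hu2 i (by omega), hf0, hg0, map_zero]
  -- multiplicativity of L
  have hmul : ∀ x y : A, L (x * y) = L x * L y := by
    have key : ((LinearMap.mul K A).compr₂ L) = (LinearMap.mul K B).compl₁₂ L L := by
      apply (Module.Basis.mk hfli hfsp.ge).ext; intro s
      apply (Module.Basis.mk hfli hfsp.ge).ext; intro t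
      simp only [LinearMap.compr₂_apply, LinearMap.compl₁₂_apply, LinearMap.mul_apply',
        Module.Basis.mk_apply]
      rw [← hfm]
      rcases e1cls s.1 with hs | hs | ⟨i, hi1, hi2, hs⟩
      · exact absurd hs s.2
      all_goals rcases e1cls t.1 with ht | ht | ⟨j, hj1, hj2, ht⟩
      · exact absurd ht t.2
      · -- v * v
        rw [hs, ht, e1vv, Lpow (n - 2) (by omega), Lv]
        have p1 : g (mpow u₂ (n - 3)) * g (mpow u₂ (n - 3)) = 0 := by
          rw [← hgm, mpow_add' u₂ (by omega) (by omega), hu2 _ (by omega), hg0]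
        have p2 : g (mpow u₂ (n - 3)) * g v₂ = 0 := by
          rw [← hgm, s2_uv (n - 3) (by omega), hu2 _ (by omega), hg0]
        have p3 : g v₂ * g (mpow u₂ (n - 3)) = 0 := by
          rw [← hgm, s2_vu (n - 3) (by omega), hg0]
        have p4 : g v₂ * g v₂ = g (mpow u₂ (n - 2)) := by rw [← hgm, e2vv]
        rw [sub_mul, mul_sub, mul_sub, p1, p2, p3, p4]
        abel
      · -- v * u^j
        rw [hs, ht, s1_vu j hj1, Lpow (n - 3 + j) (by omega), Lv, Lpow j hj1, sub_mul,
          ← hgm, ← hgm, mpow_add' u₂ (by omega) hj1, s2_vu j hj1, hg0, sub_zero]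
      · exact absurd ht t.2
      · -- u^i * v
        rw [hs, ht, s1_uv i hi1, hf0, map_zero, Lpow i hi1, Lv, mul_sub, ← hgm, ← hgm,
          mpow_add' u₂ hi1 (by omega), s2_uv i hi1, show i + (n - 3) = n - 3 + i by omega,
          sub_self]
      · -- u^i * u^j
        rw [hs, ht, mpow_add' u₁ hi1 hj1, Lpow (i + j) (by omega), Lpow i hi1, Lpow j hj1,
          ← hgm, mpow_add' u₂ hi1 hj1]
    intro x y
    have := DFunLike.congr_fun (DFunLike.congr_fun key x) y
    simpa only [LinearMap.compr₂_apply, LinearMap.compl₁₂_apply, LinearMap.mul_apply'] using this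
  -- inverse relations
  have hL'L : ∀ s : {s : S₁ // s ≠ 0}, L' (L (f s.1)) = f s.1 := by
    intro s
    rcases e1cls s.1 with hs | hs | ⟨i, hi1, hi2, hs⟩
    · exact absurd hs s.2
    · rw [hs, Lv, map_sub, L'pow (n - 3) (by omega), L'v, sub_sub_cancel]
    · rw [hs, Lpow i hi1, L'pow i hi1]
  have hLL' : ∀ s : {s : S₂ // s ≠ 0}, L (L' (g s.1)) = g s.1 := by
    intro s
    rcases e2cls s.1 with hs | hs | ⟨i, hi1, hi2, hs⟩
    · exact absurd hs s.2
    · rw [hs, L'v, map_sub, Lpow (n - 3) (by omega), Lv, sub_sub_cancel]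
    · rw [hs, L'pow i hi1, Lpow i hi1]
  have hcomp1 : L' ∘ₗ L = LinearMap.id := by
    apply (Module.Basis.mk hfli hfsp.ge).ext; intro s
    simp only [LinearMap.comp_apply, LinearMap.id_apply, Module.Basis.mk_apply]
    exact hL'L s
  have hcomp2 : L ∘ₗ L' = LinearMap.id := by
    apply (Module.Basis.mk hgli hgsp.ge).ext; intro s
    simp only [LinearMap.comp_apply, LinearMap.id_apply, Module.Basis.mk_apply]
    exact hLL' s
  refine ⟨{ toFun := L, map_add' := map_add L, map_smul' := map_smul L,
            map_zero' := map_zero L, map_mul' := hmul }, ?_, ?_⟩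
  · intro x y hxy
    have h1 : L' (L x) = x := DFunLike.congr_fun hcomp1 x
    have h2 : L' (L y) = y := DFunLike.congr_fun hcomp1 y
    have hxy' : L x = L y := hxy
    rw [← h1, ← h2, hxy']
  · intro y
    exact ⟨L' y, DFunLike.congr_fun hcomp2 y⟩
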